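/- Let (S, ⊕, σ, ε) be a locally finite SFD partial semigroup and let F, G be disjoint finite subsets of ℕ+. Then the map (ω₁, ω₂) ↦ ω₁ ⊕ ω₂ from S_F × S_G to S_{F ∪ G} is well defined and injective; consequently, for every multiplicative statistics c with values in a commutative ℚ-algebra R and every X ⊆ S, writing X_F ⊕ X_G := {ω₁ ⊕ ω₂ : ω₁ ∈ X_F, ω₂ ∈ X_G}, one has ∑_{ω ∈ X_F ⊕ X_G} c(ω) = c(X_F) · c(X_G). -/

import Mathlib

/-- A square-free decomposable (SFD) partial semigroup. -/
structure SFD (S : Type*) where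
  eps : S
  op : S → S → S
  supp : S → Finset ℕ+
  supp_eq_empty : ∀ ω : S, supp ω = ∅ ↔ ω = eps
  eps_op : ∀ ω : S, op eps ω = ω
  op_eps : ∀ ω : S, op ω eps = ω
  supp_op : ∀ ω₁ ω₂ : S, supp ω₁ ∩ supp ω₂ = ∅ →
      supp (op ω₁ ω₂) = supp ω₁ ∪ supp ω₂
  op_comm : ∀ ω₁ ω₂ : S, supp ω₁ ∩ supp ω₂ = ∅ → op ω₁ ω₂ = op ω₂ ω₁
  op_assoc : ∀ ω₁ ω₂ ω₃ : S, supp ω₁ ∩ supp ω₂ = ∅ →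
      supp ω₁ ∩ supp ω₃ = ∅ → supp ω₂ ∩ supp ω₃ = ∅ →
      op (op ω₁ ω₂) ω₃ = op ω₁ (op ω₂ ω₃)
  levi : ∀ a b c d : S, supp a ∩ supp b = ∅ → supp c ∩ supp d = ∅ →
      op a b = op c d →
      ∃ w11 w12 w21 w22 : S,
        supp w11 ∩ supp w12 = ∅ ∧ supp w21 ∩ supp w22 = ∅ ∧
        supp w11 ∩ supp w21 = ∅ ∧ supp w12 ∩ supp w22 = ∅ ∧
        a = op w11 w12 ∧ b = op w21 w22 ∧ c = op w11 w21 ∧ d = op w12 w22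

/-- Iterated sum of a list of elements. -/
def SFD.opList {S : Type*} (P : SFD S) : List S → S
  | [] => P.eps
  | a :: l => P.op a (P.opList l)

/-- Iterated sum of a finite family indexed by `Fin n`. -/
def SFD.opFam {S : Type*} (P : SFD S) {n : ℕ} (ω : Fin n → S) : S :=
  P.opList (List.ofFn ω)

/-- An atom: a nonunit element which cannot be split. -/
def SFD.IsAtom {S : Type*} (P : SFD S) (ω : S) : Prop :=
  ω ≠ P.eps ∧ ∀ ω₁ ω₂ : S, P.supp ω₁ ∩ P.supp ω₂ = ∅ → ω = P.op ω₁ ω₂ →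
    ω₁ = P.eps ∨ ω₂ = P.eps

/-- for disjoint finite sets `F`, `G` of `ℕ+`, the map
`(ω₁, ω₂) ↦ ω₁ ⊕ ω₂` from `S_F × S_G` to `S_{F ∪ G}` is well defined and
injective, and consequently the sum of a multiplicative statistics over
`X_F ⊕ X_G` is the product of its sums over `X_F` and `X_G`. -/
theorem slice_op_welldefined_injective_and_sum {S : Type*} {R : Type*}
    [CommRing R] [Algebra ℚ R] (P : SFD S)
    (hlf : ∀ F : Finset ℕ+, {ω : S | P.supp ω = F}.Finite)
    (c : S → R)
    (hmul : ∀ ω₁ ω₂ : S, P.supp ω₁ ∩ P.supp ω₂ = ∅ →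
      c (P.op ω₁ ω₂) = c ω₁ * c ω₂)
    (F G : Finset ℕ+) (hFG : F ∩ G = ∅) :
    (∀ ω₁ ω₂ : S, P.supp ω₁ = F → P.supp ω₂ = G →
      P.supp (P.op ω₁ ω₂) = F ∪ G) ∧
    (∀ ω₁ ω₂ ω₁' ω₂' : S, P.supp ω₁ = F → P.supp ω₂ = G →
      P.supp ω₁' = F → P.supp ω₂' = G →
      P.op ω₁ ω₂ = P.op ω₁' ω₂' → ω₁ = ω₁' ∧ ω₂ = ω₂') ∧
    (∀ X : Set S,
      (∑ᶠ ω ∈ {w : S | ∃ ω₁ ∈ {u ∈ X | P.supp u = F},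
          ∃ ω₂ ∈ {u ∈ X | P.supp u = G}, w = P.op ω₁ ω₂}, c ω)
        = (∑ᶠ ω ∈ {u ∈ X | P.supp u = F}, c ω) *
          (∑ᶠ ω ∈ {u ∈ X | P.supp u = G}, c ω)) := by
  have hinj : ∀ ω₁ ω₂ ω₁' ω₂' : S, P.supp ω₁ = F → P.supp ω₂ = G →
      P.supp ω₁' = F → P.supp ω₂' = G →
      P.op ω₁ ω₂ = P.op ω₁' ω₂' → ω₁ = ω₁' ∧ ω₂ = ω₂' := by
    intro ω₁ ω₂ ω₁' ω₂' h1 h2 h1' h2' heq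
    obtain ⟨w11, w12, w21, w22, d1, d2, d3, d4, e1, e2, e3, e4⟩ :=
      P.levi ω₁ ω₂ ω₁' ω₂' (by rw [h1, h2]; exact hFG) (by rw [h1', h2']; exact hFG) heq
    have s1 : P.supp w11 ∪ P.supp w12 = F := by rw [← P.supp_op _ _ d1, ← e1, h1]
    have s2 : P.supp w21 ∪ P.supp w22 = G := by rw [← P.supp_op _ _ d2, ← e2, h2]
    have s3 : P.supp w11 ∪ P.supp w21 = F := by rw [← P.supp_op _ _ d3, ← e3, h1']
    have s4 : P.supp w12 ∪ P.supp w22 = G := by rw [← P.supp_op _ _ d4, ← e4, h2']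
    have hw12 : w12 = P.eps := by
      rw [← P.supp_eq_empty, ← Finset.subset_empty, ← hFG]
      exact Finset.subset_inter (s1 ▸ Finset.subset_union_right)
        (s4 ▸ Finset.subset_union_left)
    have hw21 : w21 = P.eps := by
      rw [← P.supp_eq_empty, ← Finset.subset_empty, ← hFG]
      exact Finset.subset_inter (s3 ▸ Finset.subset_union_right)
        (s2 ▸ Finset.subset_union_left)
    subst hw12 hw21
    exact ⟨e1.trans e3.symm, e2.trans e4.symm⟩
  refine ⟨fun ω₁ ω₂ h1 h2 => by rw [P.supp_op _ _ (by rw [h1, h2]; exact hFG), h1, h2],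
    hinj, fun X => ?_⟩
  classical
  have hA : {u ∈ X | P.supp u = F}.Finite := (hlf F).subset (fun u hu => hu.2)
  have hB : {u ∈ X | P.supp u = G}.Finite := (hlf G).subset (fun u hu => hu.2)
  set a := hA.toFinset with ha
  set b := hB.toFinset with hb
  have hset : {w : S | ∃ ω₁ ∈ {u ∈ X | P.supp u = F},
      ∃ ω₂ ∈ {u ∈ X | P.supp u = G}, w = P.op ω₁ ω₂}
      = ↑(Finset.image₂ P.op a b) := by
    ext w
    simp only [Set.mem_setOf_eq, Finset.coe_image₂, Set.mem_image2,
      ha, hb, Set.Finite.coe_toFinset]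
    constructor
    · rintro ⟨x, hx, y, hy, rfl⟩; exact ⟨x, hx, y, hy, rfl⟩
    · rintro ⟨x, hx, y, hy, rfl⟩; exact ⟨x, hx, y, hy, rfl⟩
  rw [hset, finsum_mem_coe_finset, ← hA.coe_toFinset, ← hB.coe_toFinset,
    finsum_mem_coe_finset, finsum_mem_coe_finset, ← ha, ← hb]
  have hmemF : ∀ x ∈ a, P.supp x = F := fun x hx => (hA.mem_toFinset.mp hx).2
  have hmemG : ∀ x ∈ b, P.supp x = G := fun x hx => (hB.mem_toFinset.mp hx).2
  rw [← Finset.image_uncurry_product, Finset.sum_image ?hinj]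
  · rw [Finset.sum_product, Finset.sum_mul_sum]
    refine Finset.sum_congr rfl fun x hx => Finset.sum_congr rfl fun y hy => ?_
    exact hmul x y (by rw [hmemF x hx, hmemG y hy]; exact hFG)
  case hinj =>
    rintro ⟨x, y⟩ hxy ⟨x', y'⟩ hxy' h
    simp only [Finset.coe_product, Set.mem_prod, Finset.mem_coe, Finset.mem_product] at hxy hxy'
    obtain ⟨hx, hy⟩ := hxy
    obtain ⟨hx', hy'⟩ := hxy'
    obtain ⟨rfl, rfl⟩ := hinj x y x' y' (hmemF x hx) (hmemG y hy)
      (hmemF x' hx') (hmemG y' hy') h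
    rfl
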